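/- The function u(x,y,t) = a₀/(1 + 12 a₀ t) · x² y² − (2/3) ln(1 + 12 a₀ t), defined for a₀ ∈ ℝ and t such that 1 + 12 a₀ t > 0, satisfies the partial differential equation uₜ = det(D²u) − Δ²u, where det(D²u) = u_{xx} u_{yy} − u_{xy}² and Δ²u = u_{xxxx} + 2 u_{xxyy} + u_{yyyy}. -/

import Mathlib

noncomputable section


lemma dq' (A B : ℝ) : (deriv fun z : ℝ => A * z ^ 2 - B) = fun z : ℝ => 2 * A * z := by
  funext z
  have h : HasDerivAt (fun z : ℝ => A * z ^ 2 - B) (2 * A * z) z := by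
    have := ((hasDerivAt_pow 2 z).const_mul A).sub_const B
    simpa [mul_comm, mul_assoc, mul_left_comm] using this
  exact h.deriv

lemma dq (A B z : ℝ) : deriv (fun z : ℝ => A * z ^ 2 - B) z = 2 * A * z := by
  rw [dq']

lemma dlin (C : ℝ) : (deriv fun z : ℝ => C * z) = fun _ : ℝ => C := by
  funext z; simpa using ((hasDerivAt_id z).const_mul C).deriv

lemma dq2 (A B : ℝ) : iteratedDeriv 2 (fun z : ℝ => A * z ^ 2 - B) = fun _ => 2 * A := by
  rw [iteratedDeriv_succ, iteratedDeriv_one, dq', dlin]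

lemma dq2' (A B z : ℝ) : iteratedDeriv 2 (fun z : ℝ => A * z ^ 2 - B) z = 2 * A := by
  rw [dq2]

lemma dq4 (A B z : ℝ) : iteratedDeriv 4 (fun z : ℝ => A * z ^ 2 - B) z = 0 := by
  rw [show (4:ℕ) = 2+2 from rfl, iteratedDeriv_succ, iteratedDeriv_succ, dq2]
  simp

/-- The explicit solution on the unit square. -/
def U (a₀ x y t : ℝ) : ℝ :=
  a₀ / (1 + 12 * a₀ * t) * x ^ 2 * y ^ 2 - (2 / 3) * Real.log (1 + 12 * a₀ * t)

/-- `u(x,y,t) = a₀/(1+12a₀t) x²y² − (2/3)ln(1+12a₀t)` satisfies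
`uₜ = det(D²u) − Δ²u` wherever `1 + 12a₀t > 0`. -/
theorem stmt0 (a₀ x y t : ℝ) (ht : 1 + 12 * a₀ * t > 0) :
    deriv (fun s => U a₀ x y s) t =
      (iteratedDeriv 2 (fun x' => U a₀ x' y t) x *
        iteratedDeriv 2 (fun y' => U a₀ x y' t) y -
        (deriv (fun x' => deriv (fun y' => U a₀ x' y' t) y) x) ^ 2) -
      (iteratedDeriv 4 (fun x' => U a₀ x' y t) x +
        2 * iteratedDeriv 2 (fun x' => iteratedDeriv 2 (fun y' => U a₀ x' y' t) y) x +
        iteratedDeriv 4 (fun y' => U a₀ x y' t) y) := by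
  set c : ℝ := a₀ / (1 + 12 * a₀ * t) with hc
  set K : ℝ := (2 / 3) * Real.log (1 + 12 * a₀ * t) with hK
  have hne : (1 + 12 * a₀ * t) ≠ 0 := ne_of_gt ht
  -- rewrite spatial slices as quadratics
  have hx : (fun x' => U a₀ x' y t) = fun x' : ℝ => (c * y ^ 2) * x' ^ 2 - K := by
    funext x'; simp only [U, hc, hK]; try ring
  have hy : (fun y' => U a₀ x y' t) = fun y' : ℝ => (c * x ^ 2) * y' ^ 2 - K := by
    funext y'; simp only [U, hc, hK]; try ring
  have hmix : (fun x' => deriv (fun y' => U a₀ x' y' t) y)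
      = fun x' : ℝ => (2 * c * y) * x' ^ 2 - 0 := by
    funext x'
    have hyy : (fun y' => U a₀ x' y' t) = fun y' : ℝ => (c * x' ^ 2) * y' ^ 2 - K := by
      funext y'; simp only [U, hc, hK]; try ring
    rw [hyy, dq]; ring
  have hmix2 : (fun x' => iteratedDeriv 2 (fun y' => U a₀ x' y' t) y)
      = fun x' : ℝ => (2 * c) * x' ^ 2 - 0 := by
    funext x'
    have hyy : (fun y' => U a₀ x' y' t) = fun y' : ℝ => (c * x' ^ 2) * y' ^ 2 - K := by
      funext y'; simp only [U, hc, hK]; try ring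
    rw [hyy, dq2']; ring
  rw [hx, hy, hmix, hmix2, dq2', dq2', dq2', dq4, dq4, dq]
  -- time derivative
  have hg : HasDerivAt (fun s : ℝ => 1 + 12 * a₀ * s) (12 * a₀) t := by
    simpa using (((hasDerivAt_id t).const_mul (12 * a₀)).const_add 1)
  have hA : HasDerivAt (fun s : ℝ => a₀ / (1 + 12 * a₀ * s) * x ^ 2 * y ^ 2)
      (a₀ * (-(12 * a₀) / (1 + 12 * a₀ * t) ^ 2) * x ^ 2 * y ^ 2) t := by
    have := (((hg.inv hne).const_mul a₀).mul_const (x ^ 2)).mul_const (y ^ 2)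
    simpa [div_eq_mul_inv, mul_assoc] using this
  have hL : HasDerivAt (fun s : ℝ => (2 / 3) * Real.log (1 + 12 * a₀ * s))
      ((2 / 3) * (12 * a₀ / (1 + 12 * a₀ * t))) t := (hg.log hne).const_mul (2 / 3)
  have hU : HasDerivAt (fun s => U a₀ x y s)
      (a₀ * (-(12 * a₀) / (1 + 12 * a₀ * t) ^ 2) * x ^ 2 * y ^ 2
        - (2 / 3) * (12 * a₀ / (1 + 12 * a₀ * t))) t := by
    exact hA.sub hL
  rw [hU.deriv, hc]
  field_simp
  norm_num
  field_simp
  ring
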